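/- The set E = {α ∈ (0,1) irrational : there exists B such that q_k + 1 ≤ B^k for all k ∈ ℕ}, where q_k are the continued fraction denominators of α, has full Lebesgue measure in (0,1). -/

import Mathlib

open MeasureTheory
open scoped ENNReal

namespace CFExp

/-- Continuant pairs computed from the *reversed* list of partial denominators:
`((numCurrent, numPrevious), (denCurrent, denPrevious))`. -/
def cp : List ℕ → (ℕ × ℕ) × (ℕ × ℕ)
  | [] => ((0, 1), (1, 0))
  | x :: l =>
    let c := cp l
    ((x * c.1.1 + c.1.2, c.1.1), (x * c.2.1 + c.2.2, c.2.1))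

def den (l : List ℕ) : ℕ := (cp l).2.1
def num (l : List ℕ) : ℕ := (cp l).1.1

/-- the n-th partial denominator, as a natural number -/
noncomputable def pd (α : ℝ) (n : ℕ) : ℕ :=
  (((GenContFract.of α).s.get? n).map fun gp => (⌊gp.b⌋).toNat).getD 1

/-- reversed list of first k partial denominators -/
noncomputable def tup (α : ℝ) : ℕ → List ℕ
  | 0 => []
  | k+1 => pd α k :: tup α k

lemma stream_some {α : ℝ} (hα : Irrational α) (n : ℕ) :
    ∃ gp, (GenContFract.of α).s.get? n = some gp := by
  rw [← Option.ne_none_iff_exists']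
  intro h
  have hterm : (GenContFract.of α).Terminates := ⟨n, h⟩
  obtain ⟨q, rfl⟩ := (GenContFract.terminates_iff_rat α).1 hterm
  exact hα ⟨q, rfl⟩

lemma pd_eq {α : ℝ} {n : ℕ} {gp : GenContFract.Pair ℝ}
    (h : (GenContFract.of α).s.get? n = some gp) :
    (pd α n : ℝ) = gp.b ∧ 1 ≤ pd α n := by
  obtain ⟨z, hz⟩ := GenContFract.exists_int_eq_of_partDen (GenContFract.partDen_eq_s_b h)
  have h1 : (1 : ℝ) ≤ gp.b := GenContFract.of_one_le_get?_partDen (GenContFract.partDen_eq_s_b h)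
  have hz1 : 1 ≤ z := by exact_mod_cast hz ▸ h1
  have : pd α n = z.toNat := by simp [pd, h, hz]
  constructor
  · rw [this, hz]
    norm_cast
    simp [Int.toNat_of_nonneg (by omega : (0:ℤ) ≤ z)]
  · rw [this]; omega

lemma tup_length (α : ℝ) (k : ℕ) : (tup α k).length = k := by
  induction k with
  | zero => rfl
  | succ k ih => simp [tup, ih]

lemma tup_pos {α : ℝ} (hα : Irrational α) (k : ℕ) : ∀ x ∈ tup α k, 1 ≤ x := by
  induction k with
  | zero => simp [tup]
  | succ k ih =>
    intro x hx
    rcases List.mem_cons.1 hx with rfl | hx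
    · obtain ⟨gp, hgp⟩ := stream_some hα k
      exact (pd_eq hgp).2
    · exact ih x hx

lemma den_pos {l : List ℕ} (h : ∀ x ∈ l, 1 ≤ x) : 1 ≤ den l := by
  induction l with
  | nil => simp [den, cp]
  | cons x l ih =>
    have hx : 1 ≤ x := h x (List.mem_cons_self)
    have hd : 1 ≤ den l := ih fun y hy => h y (List.mem_cons_of_mem x hy)
    have h2 : 1 * 1 ≤ x * den l := Nat.mul_le_mul hx hd
    simp only [den, cp] at h2 ⊢
    omega

/-- The bridge between mathlib's continuants and `cp`. -/
lemma bridge {α : ℝ} (hα : Irrational α) (h0 : ⌊α⌋ = 0) (k : ℕ) :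
    (GenContFract.of α).contsAux (k+1) =
      ⟨((cp (tup α k)).1.1 : ℝ), ((cp (tup α k)).2.1 : ℝ)⟩ ∧
    (GenContFract.of α).contsAux k =
      ⟨((cp (tup α k)).1.2 : ℝ), ((cp (tup α k)).2.2 : ℝ)⟩ := by
  induction k with
  | zero =>
    constructor
    · rw [GenContFract.first_contAux_eq_h_one, GenContFract.of_h_eq_floor, h0]
      simp [tup, cp]
    · rw [GenContFract.zeroth_contAux_eq_one_zero]
      simp [tup, cp]
  | succ k ih =>
    obtain ⟨gp, hgp⟩ := stream_some hα k
    have ha : gp.a = 1 :=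
      GenContFract.of_partNum_eq_one (GenContFract.partNum_eq_s_a hgp)
    have hb : (pd α k : ℝ) = gp.b := (pd_eq hgp).1
    have hrec := GenContFract.contsAux_recurrence hgp ih.2 ih.1
    constructor
    · rw [hrec]
      simp only [tup, cp, ha, ← hb]
      push_cast
      ring_nf
    · exact ih.1


lemma dens_eq {α : ℝ} (hα : Irrational α) (h0 : ⌊α⌋ = 0) (k : ℕ) :
    (GenContFract.of α).dens k = (den (tup α k) : ℝ) := by
  rw [GenContFract.den_eq_conts_b, GenContFract.nth_cont_eq_succ_nth_contAux,
    (bridge hα h0 k).1]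
  rfl

lemma nums_eq {α : ℝ} (hα : Irrational α) (h0 : ⌊α⌋ = 0) (k : ℕ) :
    (GenContFract.of α).nums k = (num (tup α k) : ℝ) := by
  rw [GenContFract.num_eq_conts_a, GenContFract.nth_cont_eq_succ_nth_contAux,
    (bridge hα h0 k).1]
  rfl

lemma mem_ball {α : ℝ} (hα : Irrational α) (h0 : ⌊α⌋ = 0) (k : ℕ) :
    |α - (num (tup α k) : ℝ) / (den (tup α k) : ℝ)| ≤ (((den (tup α k) : ℝ)) ^ 2)⁻¹ := by
  have hnt : ¬(GenContFract.of α).TerminatedAt k := by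
    obtain ⟨gp, hgp⟩ := stream_some hα k
    simp [GenContFract.terminatedAt_iff_s_none, hgp]
  have happrox := GenContFract.abs_sub_convs_le hnt
  have hconv : (GenContFract.of α).convs k = (num (tup α k) : ℝ) / (den (tup α k) : ℝ) := by
    rw [GenContFract.conv_eq_num_div_den, dens_eq hα h0, nums_eq hα h0]
  have hd1 : (1 : ℝ) ≤ (den (tup α k) : ℝ) := by
    exact_mod_cast den_pos (tup_pos hα k)
  have hmono : (GenContFract.of α).dens k ≤ (GenContFract.of α).dens (k+1) :=
    GenContFract.of_den_mono
  have hdk : (GenContFract.of α).dens k = (den (tup α k) : ℝ) := dens_eq hα h0 k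
  have hpos : (0:ℝ) < (den (tup α k) : ℝ) := lt_of_lt_of_le one_pos hd1
  calc |α - (num (tup α k) : ℝ) / (den (tup α k) : ℝ)|
      ≤ 1 / ((GenContFract.of α).dens k * (GenContFract.of α).dens (k+1)) := by
        rw [← hconv]; exact happrox
    _ ≤ (((den (tup α k) : ℝ)) ^ 2)⁻¹ := by
        rw [one_div]
        apply inv_anti₀
        · positivity
        · rw [sq]
          have h1 : (0:ℝ) < (GenContFract.of α).dens k := by rw [hdk]; exact hpos
          have h2 : (den (tup α k) : ℝ) ≤ (GenContFract.of α).dens (k+1) := by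
            rw [← hdk]; exact hmono
          exact mul_le_mul (le_of_eq hdk.symm) h2 (le_of_lt hpos) (le_of_lt h1)

/-! ### The combinatorial sum over tuples -/

noncomputable def z : ℝ≥0∞ := ∑' n : ℕ, ((n : ℝ≥0∞) + 1) ^ (-(3/2) : ℝ)

noncomputable def G (k : ℕ) (l : List ℕ) : ℝ≥0∞ :=
  if l.length = k ∧ ∀ x ∈ l, 1 ≤ x then (den l : ℝ≥0∞) ^ (-(3/2) : ℝ) else 0

lemma z_ne_top : z ≠ ⊤ := by
  have hsum : Summable (fun n : ℕ => ((n : ℝ) + 1) ^ (-(3/2) : ℝ)) := by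
    have h1 : Summable (fun n : ℕ => ((n : ℝ) ^ ((3:ℝ)/2))⁻¹) :=
      Real.summable_nat_rpow_inv.mpr (by norm_num)
    have h2 := h1.comp_injective Nat.succ_injective
    refine h2.congr fun n => ?_
    simp only [Function.comp]
    rw [Real.rpow_neg (by positivity)]
    push_cast
    ring_nf
  have heq : z = ENNReal.ofReal (∑' n : ℕ, ((n : ℝ) + 1) ^ (-(3/2) : ℝ)) := by
    rw [ENNReal.ofReal_tsum_of_nonneg (fun n => by positivity) hsum]
    refine tsum_congr fun n => ?_
    rw [← ENNReal.ofReal_rpow_of_pos (by positivity)]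
    congr 1
    rw [← ENNReal.ofReal_natCast n, ← ENNReal.ofReal_one, ← ENNReal.ofReal_add (by positivity) zero_le_one]
  rw [heq]
  exact ENNReal.ofReal_ne_top

lemma tsum_G_zero : ∑' l : List ℕ, G 0 l = 1 := by
  rw [tsum_eq_single ([] : List ℕ)]
  · simp [G, den, cp]
  · intro l hl
    have : l.length ≠ 0 := fun h => hl (List.length_eq_zero_iff.1 h)
    simp [G, this]

lemma den_cons_ge (x : ℕ) (l : List ℕ) : x * den l ≤ den (x :: l) := by
  simp only [den, cp]
  omega

lemma rpow_anti {a b : ℝ≥0∞} (h : a ≤ b) : b ^ (-(3/2) : ℝ) ≤ a ^ (-(3/2) : ℝ) := by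
  rw [ENNReal.rpow_neg, ENNReal.rpow_neg]
  exact ENNReal.inv_le_inv.2 (ENNReal.rpow_le_rpow h (by norm_num))

lemma G_cons_le (k : ℕ) (x : ℕ) (l : List ℕ) :
    G (k+1) (x :: l) ≤ (if 1 ≤ x then (x : ℝ≥0∞) ^ (-(3/2) : ℝ) else 0) * G k l := by
  by_cases hc : (x :: l).length = k + 1 ∧ ∀ y ∈ x :: l, 1 ≤ y
  · have hx : 1 ≤ x := hc.2 x (List.mem_cons_self)
    have hl : ∀ y ∈ l, 1 ≤ y := fun y hy => hc.2 y (List.mem_cons_of_mem x hy)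
    have hlen : l.length = k := by simpa using hc.1
    have hd1 : 1 ≤ den l := den_pos hl
    rw [G, if_pos hc, if_pos hx, G, if_pos ⟨hlen, hl⟩]
    calc (den (x :: l) : ℝ≥0∞) ^ (-(3/2) : ℝ)
        ≤ ((x * den l : ℕ) : ℝ≥0∞) ^ (-(3/2) : ℝ) := by
          apply rpow_anti
          exact_mod_cast den_cons_ge x l
      _ = ((x : ℝ≥0∞) * (den l : ℝ≥0∞)) ^ (-(3/2) : ℝ) := by push_cast; ring_nf
      _ = (x : ℝ≥0∞) ^ (-(3/2) : ℝ) * (den l : ℝ≥0∞) ^ (-(3/2) : ℝ) :=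
          ENNReal.mul_rpow_of_ne_top (ENNReal.natCast_ne_top x) (ENNReal.natCast_ne_top _) _
  · rw [G, if_neg hc]
    exact zero_le

lemma tsum_h_eq : (∑' x : ℕ, if 1 ≤ x then (x : ℝ≥0∞) ^ (-(3/2) : ℝ) else 0) = z := by
  have hinj : Function.Injective Nat.succ := Nat.succ_injective
  have hsupp : Function.support (fun x : ℕ => if 1 ≤ x then (x : ℝ≥0∞) ^ (-(3/2) : ℝ) else 0)
      ⊆ Set.range Nat.succ := by
    intro x hx
    match x, hx with
    | 0, hx => simp at hx
    | m+1, _ => exact ⟨m, rfl⟩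
  rw [← hinj.tsum_eq hsupp, z]
  refine tsum_congr fun n => ?_
  rw [if_pos (Nat.succ_le_succ (Nat.zero_le n))]
  push_cast
  ring_nf

lemma tsum_G_succ (k : ℕ) : ∑' l : List ℕ, G (k+1) l ≤ z * ∑' l : List ℕ, G k l := by
  have hinj : Function.Injective (fun p : ℕ × List ℕ => p.1 :: p.2) := by
    rintro ⟨x, l⟩ ⟨y, m⟩ h
    simpa [Prod.ext_iff] using h
  have hsupp : Function.support (G (k+1)) ⊆ Set.range (fun p : ℕ × List ℕ => p.1 :: p.2) := by
    intro l hl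
    cases l with
    | nil =>
      exfalso
      apply hl
      simp [G]
    | cons x l => exact ⟨(x, l), rfl⟩
  rw [← hinj.tsum_eq hsupp]
  calc ∑' p : ℕ × List ℕ, G (k+1) (p.1 :: p.2)
      ≤ ∑' p : ℕ × List ℕ,
          (if 1 ≤ p.1 then (p.1 : ℝ≥0∞) ^ (-(3/2) : ℝ) else 0) * G k p.2 :=
        ENNReal.tsum_le_tsum fun p => G_cons_le k p.1 p.2
    _ = (∑' x : ℕ, if 1 ≤ x then (x : ℝ≥0∞) ^ (-(3/2) : ℝ) else 0) * ∑' l : List ℕ, G k l := by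
        rw [ENNReal.tsum_prod']
        simp_rw [ENNReal.tsum_mul_left]
        rw [ENNReal.tsum_mul_right]
    _ = z * ∑' l : List ℕ, G k l := by rw [tsum_h_eq]

lemma tsum_G_le (k : ℕ) : ∑' l : List ℕ, G k l ≤ z ^ k := by
  induction k with
  | zero => simp [tsum_G_zero]
  | succ k ih =>
    calc ∑' l : List ℕ, G (k+1) l ≤ z * ∑' l : List ℕ, G k l := tsum_G_succ k
      _ ≤ z * z ^ k := mul_le_mul_right ih z
      _ = z ^ (k+1) := (pow_succ' z k).symm

/-! ### The measure estimate -/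

def Aset (B k : ℕ) : Set ℝ :=
  {α | α ∈ Set.Ioo (0:ℝ) 1 ∧ Irrational α ∧ ((B:ℝ)) ^ k ≤ (GenContFract.of α).dens k}

noncomputable def Cset (B k : ℕ) (l : List ℕ) : Set ℝ :=
  if l.length = k ∧ (∀ x ∈ l, 1 ≤ x) ∧ B ^ k ≤ den l then
    Metric.closedBall ((num l : ℝ) / (den l : ℝ)) ((((den l : ℝ)) ^ 2)⁻¹)
  else ∅

lemma Aset_subset (B k : ℕ) : Aset B k ⊆ ⋃ l : List ℕ, Cset B k l := by
  rintro α ⟨hIoo, hirr, hden⟩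
  have h0 : ⌊α⌋ = 0 := Int.floor_eq_zero_iff.2 ⟨hIoo.1.le, hIoo.2⟩
  refine Set.mem_iUnion.2 ⟨tup α k, ?_⟩
  have hBden : B ^ k ≤ den (tup α k) := by
    have := hden.trans_eq (dens_eq hirr h0 k)
    exact_mod_cast this
  rw [Cset, if_pos ⟨tup_length α k, tup_pos hirr k, hBden⟩]
  rw [Metric.mem_closedBall, Real.dist_eq]
  exact mem_ball hirr h0 k

lemma vol_Cset (B k : ℕ) (l : List ℕ) :
    volume (Cset B k l) ≤
      2 * (((B : ℝ≥0∞)) ^ k) ^ (-(1/2) : ℝ) * G k l := by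
  rw [Cset]
  split_ifs with h
  · obtain ⟨hlen, hpos, hBk⟩ := h
    have hd1 : 1 ≤ den l := den_pos hpos
    have hdR : (1:ℝ) ≤ (den l : ℝ) := by exact_mod_cast hd1
    have hd0 : ((den l : ℝ≥0∞)) ≠ 0 := by
      simp only [ne_eq, Nat.cast_eq_zero]
      omega
    have hdt : ((den l : ℝ≥0∞)) ≠ ⊤ := ENNReal.natCast_ne_top _
    rw [G, if_pos ⟨hlen, hpos⟩]
    rw [Real.volume_closedBall]
    have hvol : ENNReal.ofReal (2 * (((den l : ℝ)) ^ 2)⁻¹)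
        = 2 * ((den l : ℝ≥0∞)) ^ (-(2:ℝ)) := by
      rw [ENNReal.ofReal_mul (by norm_num)]
      congr 1
      · simp
      · rw [ENNReal.ofReal_inv_of_pos (by positivity), ENNReal.ofReal_pow (by positivity)]
        rw [ENNReal.rpow_neg, ENNReal.ofReal_natCast]
        congr 1
        rw [← ENNReal.rpow_natCast]
        norm_num
    rw [hvol]
    have hsplit : ((den l : ℝ≥0∞)) ^ (-(2:ℝ))
        = ((den l : ℝ≥0∞)) ^ (-(1/2):ℝ) * ((den l : ℝ≥0∞)) ^ (-(3/2):ℝ) := by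
      rw [← ENNReal.rpow_add _ _ hd0 hdt]
      norm_num
    rw [hsplit, ← mul_assoc]
    apply mul_le_mul_left
    apply mul_le_mul_right
    -- (den l)^(-1/2) ≤ (B^k)^(-1/2)
    rw [ENNReal.rpow_neg, ENNReal.rpow_neg]
    refine ENNReal.inv_le_inv.2 (ENNReal.rpow_le_rpow ?_ (by norm_num))
    exact_mod_cast hBk
  · simp

lemma vol_Aset (B k : ℕ) :
    volume (Aset B k) ≤ 2 * (((B : ℝ≥0∞)) ^ (-(1/2) : ℝ) * z) ^ k := by
  calc volume (Aset B k) ≤ volume (⋃ l : List ℕ, Cset B k l) :=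
        measure_mono (Aset_subset B k)
    _ ≤ ∑' l : List ℕ, volume (Cset B k l) := measure_iUnion_le _
    _ ≤ ∑' l : List ℕ, 2 * (((B : ℝ≥0∞)) ^ k) ^ (-(1/2) : ℝ) * G k l :=
        ENNReal.tsum_le_tsum fun l => vol_Cset B k l
    _ = 2 * (((B : ℝ≥0∞)) ^ k) ^ (-(1/2) : ℝ) * ∑' l : List ℕ, G k l :=
        ENNReal.tsum_mul_left
    _ ≤ 2 * (((B : ℝ≥0∞)) ^ k) ^ (-(1/2) : ℝ) * z ^ k :=
        mul_le_mul_right (tsum_G_le k) _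
    _ = 2 * (((B : ℝ≥0∞)) ^ (-(1/2) : ℝ) * z) ^ k := by
        rw [mul_pow, mul_assoc]
        congr 2
        rw [← ENNReal.rpow_natCast ((B : ℝ≥0∞)) k, ← ENNReal.rpow_mul, mul_comm,
          ENNReal.rpow_mul, ENNReal.rpow_natCast]

/-! ### Borel–Cantelli and the choice of `B` -/

lemma exists_ub (f : ℕ → ℝ) (N : ℕ) : ∃ M : ℝ, ∀ k ≤ N, f k ≤ M := by
  induction N with
  | zero => exact ⟨f 0, fun k hk => by simp_all [Nat.le_zero.1 hk]⟩
  | succ N ih =>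
    obtain ⟨M, hM⟩ := ih
    refine ⟨max M (f (N+1)), fun k hk => ?_⟩
    rcases Nat.lt_succ_iff_lt_or_eq.1 (Nat.lt_succ_of_le hk) with h | rfl
    · exact (hM k (Nat.lt_succ_iff.1 h)).trans (le_max_left _ _)
    · exact le_max_right _ _

lemma exists_good_B : ∃ B : ℕ, 1 ≤ B ∧
    (∑' k : ℕ, volume (Aset B k)) ≠ ⊤ := by
  obtain ⟨n, hn⟩ := ENNReal.exists_nat_gt z_ne_top
  refine ⟨(n+1)^2, Nat.one_le_pow _ _ (Nat.succ_pos n), ?_⟩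
  · set B : ℕ := (n+1)^2 with hB
    set r : ℝ≥0∞ := ((B : ℝ≥0∞)) ^ (-(1/2) : ℝ) * z with hr
    have ha0 : ((n:ℝ≥0∞) + 1) ≠ 0 := by simp
    have hat : ((n:ℝ≥0∞) + 1) ≠ ⊤ := by
      simpa using ENNReal.natCast_ne_top (n+1)
    have hBval : ((B : ℝ≥0∞)) ^ (-(1/2) : ℝ) = ((n:ℝ≥0∞) + 1)⁻¹ := by
      have hcast : ((B : ℕ) : ℝ≥0∞) = ((n:ℝ≥0∞) + 1) ^ (2:ℕ) := by
        rw [hB]; push_cast; ring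
      rw [hcast, ← ENNReal.rpow_natCast ((n:ℝ≥0∞) + 1) 2, ← ENNReal.rpow_mul]
      norm_num
      exact ENNReal.rpow_neg_one _
    have hrlt : r < 1 := by
      rw [hr, hBval]
      calc ((n:ℝ≥0∞) + 1)⁻¹ * z ≤ ((n:ℝ≥0∞) + 1)⁻¹ * n :=
            mul_le_mul_right hn.le _
        _ < ((n:ℝ≥0∞) + 1)⁻¹ * ((n:ℝ≥0∞) + 1) := by
            refine ENNReal.mul_lt_mul_right (a := ((n:ℝ≥0∞) + 1)⁻¹) (by simpa using ha0) (by simpa using ENNReal.inv_ne_top.2 ha0) ?_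
            exact ENNReal.lt_add_right (ENNReal.natCast_ne_top n) one_ne_zero
        _ = 1 := ENNReal.inv_mul_cancel ha0 hat
    have hle : (∑' k : ℕ, volume (Aset B k)) ≤ 2 * (1 - r)⁻¹ := by
      calc (∑' k : ℕ, volume (Aset B k)) ≤ ∑' k : ℕ, 2 * r ^ k :=
            ENNReal.tsum_le_tsum fun k => vol_Aset B k
        _ = 2 * (1 - r)⁻¹ := by rw [ENNReal.tsum_mul_left, ENNReal.tsum_geometric]
    refine ne_top_of_le_ne_top ?_ hle
    apply ENNReal.mul_ne_top (by norm_num)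
    rw [ENNReal.inv_ne_top]
    intro h
    exact absurd (tsub_eq_zero_iff_le.1 h) (not_le.2 hrlt)

end CFExp

open CFExp Filter in
/-- The set of irrational `α ∈ (0,1)` whose continued fraction denominators `q k`
grow at most exponentially (`q k + 1 ≤ B ^ k` for some `B`) has full Lebesgue
measure in `(0,1)`. -/
theorem cf_denominators_exp_bound_full_measure :
    volume (Set.Ioo (0 : ℝ) 1 \
      {α : ℝ | α ∈ Set.Ioo (0 : ℝ) 1 ∧ Irrational α ∧
        ∃ B : ℝ, ∀ k : ℕ, 1 ≤ k → (GenContFract.of α).dens k + 1 ≤ B ^ k}) = 0 := by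
  obtain ⟨B, hB1, hBsum⟩ := exists_good_B
  set E : Set ℝ := {α : ℝ | α ∈ Set.Ioo (0 : ℝ) 1 ∧ Irrational α ∧
        ∃ B : ℝ, ∀ k : ℕ, 1 ≤ k → (GenContFract.of α).dens k + 1 ≤ B ^ k} with hE
  have hsub : Set.Ioo (0 : ℝ) 1 \ E ⊆
      (Set.range ((↑) : ℚ → ℝ)) ∪ limsup (Aset B) atTop := by
    rintro α ⟨hIoo, hnE⟩
    by_cases hirr : Irrational α
    · right
      by_contra hnot
      rw [mem_limsup_iff_frequently_mem, not_frequently] at hnot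
      obtain ⟨N, hN⟩ := eventually_atTop.1 hnot
      -- for k ≥ N we have dens k < B^k
      have hlt : ∀ k ≥ N, (GenContFract.of α).dens k < (B:ℝ) ^ k := by
        intro k hk
        have := hN k hk
        by_contra hle
        exact this ⟨hIoo, hirr, not_lt.1 hle⟩
      -- a bound for small k
      obtain ⟨M, hM⟩ := exists_ub (fun k => (GenContFract.of α).dens k + 1) N
      set B' : ℝ := max M ((B:ℝ) + 1) with hB'
      have hB'1 : (1:ℝ) ≤ B' := by
        have : ((B:ℝ) + 1) ≤ B' := le_max_right _ _
        have hBR : (1:ℝ) ≤ (B:ℝ) := by exact_mod_cast hB1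
        linarith
      apply hnE
      refine ⟨hIoo, hirr, B', fun k hk => ?_⟩
      rcases le_or_gt N k with hNk | hkN
      · -- large k
        have h1 : (GenContFract.of α).dens k < (B:ℝ) ^ k := hlt k hNk
        have h2 : (B:ℝ) ^ k + 1 ≤ ((B:ℝ) + 1) ^ k := by
          have hnat : B ^ k + 1 ≤ (B + 1) ^ k :=
            Nat.succ_le_of_lt (Nat.pow_lt_pow_left (Nat.lt_succ_self B) (by omega))
          exact_mod_cast hnat
        have h3 : ((B:ℝ) + 1) ^ k ≤ B' ^ k :=
          pow_le_pow_left₀ (by positivity) (le_max_right _ _) k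
        linarith
      · -- small k
        have h1 : (GenContFract.of α).dens k + 1 ≤ M := hM k (le_of_lt hkN)
        have h2 : M ≤ B' := le_max_left _ _
        have h3 : B' ≤ B' ^ k :=
          le_self_pow₀ hB'1 (by omega)
        linarith
    · left
      rw [Irrational] at hirr
      exact not_not.1 hirr
  have hlim : volume (limsup (Aset B) atTop) = 0 :=
    measure_limsup_atTop_eq_zero hBsum
  have hrat : volume (Set.range ((↑) : ℚ → ℝ)) = 0 :=
    (Set.countable_range _).measure_zero _
  refine le_antisymm ?_ zero_le
  calc volume (Set.Ioo (0 : ℝ) 1 \ E)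
      ≤ volume ((Set.range ((↑) : ℚ → ℝ)) ∪ limsup (Aset B) atTop) := measure_mono hsub
    _ ≤ volume (Set.range ((↑) : ℚ → ℝ)) + volume (limsup (Aset B) atTop) :=
        measure_union_le _ _
    _ = 0 := by rw [hlim, hrat, add_zero]
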